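/- Let d ≥ 1, s ∈ (0,1), and let φ : ℝ^d → ℝ be smooth and compactly supported. Define l_s(φ)(x) := ∫_{ℝ^d} (φ(x)-φ(y))² |x-y|^{-(d+2s)} dy. Then: (a) l_s(φ)(x) is finite for every x ∈ ℝ^d; (b) l_s(φ) is continuous on ℝ^d; (c) there exists a constant C_φ > 0 such that l_s(φ)(x) ≤ C_φ (1+|x|)^{-(d+2s)} for all x ∈ ℝ^d, i.e. l_s(φ) decays at least like |x|^{-d-2s} at infinity. -/

import Mathlib

open MeasureTheory Filter Topology Set
open scoped ENNReal NNReal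
open Metric Real

noncomputable section

/-- `d`-dimensional Euclidean space. -/
abbrev Ed (d : ℕ) : Type := EuclideanSpace ℝ (Fin d)

/-- The fractional Laplacian of order `s` with normalizing constant `κ`,
defined by the second-difference integral
`(-Δ)^s φ(x) = (κ/2) ∫ (2φ(x) - φ(x+z) - φ(x-z)) |z|^{-(d+2s)} dz`. -/
def fracLap (d : ℕ) (s κ : ℝ) (φ : Ed d → ℝ) (x : Ed d) : ℝ :=
  (κ / 2) * ∫ z : Ed d, (2 * φ x - φ (x + z) - φ (x - z)) / ‖z‖ ^ ((d : ℝ) + 2 * s)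

/-- The nonlocal quadratic functional
`l_s(φ)(x) = ∫ (φ(x)-φ(y))² |x-y|^{-(d+2s)} dy`. -/
def lsFun (d : ℕ) (s : ℝ) (φ : Ed d → ℝ) (x : Ed d) : ℝ :=
  ∫ y : Ed d, (φ x - φ y) ^ 2 / ‖x - y‖ ^ ((d : ℝ) + 2 * s)

lemma integrableOn_rpow_norm_ball (d : ℕ) (hd : 0 < d) {a : ℝ} (ha : -a < d) :
    IntegrableOn (fun z : Ed d => ‖z‖ ^ a) (Metric.ball (0 : Ed d) 1) := by
  have hmeas : Measurable (fun z : Ed d => ‖z‖ ^ a) := measurable_norm.pow_const a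
  rcases le_or_gt 0 a with h0 | h0
  · refine Measure.integrableOn_of_bounded (measure_ball_lt_top.ne) hmeas.aestronglyMeasurable (M := 1) ?_
    rw [ae_restrict_iff' measurableSet_ball]
    refine Eventually.of_forall fun z hz => ?_
    rw [Real.norm_of_nonneg (Real.rpow_nonneg (norm_nonneg _) _)]
    exact Real.rpow_le_one (norm_nonneg _) (le_of_lt (mem_ball_zero_iff.mp hz)) h0
  · have hane : a ≠ 0 := ne_of_lt h0
    constructor
    · exact hmeas.aestronglyMeasurable
    · rw [HasFiniteIntegral, lintegral_enorm_of_nonneg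
        (fun z => Real.rpow_nonneg (norm_nonneg _) _)]
      rw [lintegral_eq_lintegral_meas_le _
        (Eventually.of_forall fun z => Real.rpow_nonneg (norm_nonneg _) _)
        hmeas.aemeasurable]
      set μ' := volume.restrict (Metric.ball (0 : Ed d) 1)
      have hfin : μ' Set.univ < ∞ := by
        simpa [μ', Measure.restrict_apply] using (measure_ball_lt_top
          (x := (0 : Ed d)) (r := 1))
      calc ∫⁻ t in Ioi (0:ℝ), μ' {z | t ≤ ‖z‖ ^ a}
          ≤ ∫⁻ t in Ioc (0:ℝ) 1 ∪ Ioi 1, μ' {z | t ≤ ‖z‖ ^ a} :=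
            lintegral_mono_set Ioi_subset_Ioc_union_Ioi
        _ ≤ (∫⁻ t in Ioc (0:ℝ) 1, μ' {z | t ≤ ‖z‖ ^ a})
            + ∫⁻ t in Ioi (1:ℝ), μ' {z | t ≤ ‖z‖ ^ a} := lintegral_union_le _ _ _
        _ < ∞ := by
            refine ENNReal.add_lt_top.2 ⟨?_, ?_⟩
            · calc (∫⁻ t in Ioc (0:ℝ) 1, μ' {z | t ≤ ‖z‖ ^ a})
                  ≤ ∫⁻ _ in Ioc (0:ℝ) 1, μ' Set.univ :=
                    lintegral_mono fun t => measure_mono (subset_univ _)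
                _ = μ' Set.univ * volume (Ioc (0:ℝ) 1) := by
                    rw [setLIntegral_const]
                _ < ∞ := by
                    apply ENNReal.mul_lt_top hfin
                    simp
            · have hsub : ∀ t : ℝ, 1 < t →
                  μ' {z | t ≤ ‖z‖ ^ a}
                    ≤ ENNReal.ofReal (t ^ (a⁻¹ * d)) * volume (Metric.ball (0 : Ed d) 1) := by
                intro t ht
                have ht0 : (0:ℝ) < t := lt_trans one_pos ht
                have hss : {z : Ed d | t ≤ ‖z‖ ^ a} ⊆ Metric.closedBall 0 (t ^ a⁻¹) := by
                  intro z hz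
                  simp only [mem_setOf_eq] at hz
                  have hz0 : z ≠ 0 := by
                    rintro rfl
                    simp [Real.zero_rpow hane] at hz
                    linarith
                  have hzn : (0:ℝ) < ‖z‖ := norm_pos_iff.mpr hz0
                  have : (‖z‖ ^ a) ^ a⁻¹ ≤ t ^ a⁻¹ :=
                    Real.rpow_le_rpow_of_nonpos ht0 hz (le_of_lt (inv_neg''.mpr h0))
                  rw [Real.rpow_rpow_inv (norm_nonneg _) hane] at this
                  simpa [mem_closedBall_zero_iff] using this
                calc μ' {z | t ≤ ‖z‖ ^ a} ≤ volume (Metric.closedBall (0 : Ed d) (t ^ a⁻¹)) := by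
                      exact le_trans (Measure.restrict_apply_le _ _) (measure_mono hss)
                  _ = ENNReal.ofReal ((t ^ a⁻¹) ^ (Module.finrank ℝ (Ed d)))
                        * volume (Metric.ball (0 : Ed d) 1) :=
                      Measure.addHaar_closedBall _ _ (Real.rpow_nonneg ht0.le _)
                  _ = ENNReal.ofReal (t ^ (a⁻¹ * d)) * volume (Metric.ball (0 : Ed d) 1) := by
                      rw [← Real.rpow_natCast (t ^ a⁻¹) _, ← Real.rpow_mul ht0.le]
                      simp [finrank_euclideanSpace_fin]
              calc (∫⁻ t in Ioi (1:ℝ), μ' {z | t ≤ ‖z‖ ^ a})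
                  ≤ ∫⁻ t in Ioi (1:ℝ),
                      ENNReal.ofReal (t ^ (a⁻¹ * d)) * volume (Metric.ball (0 : Ed d) 1) := by
                    refine setLIntegral_mono' measurableSet_Ioi fun t ht => hsub t ht
                _ = (∫⁻ t in Ioi (1:ℝ), ENNReal.ofReal (t ^ (a⁻¹ * d)))
                      * volume (Metric.ball (0 : Ed d) 1) :=
                    lintegral_mul_const' _ _ measure_ball_lt_top.ne
                _ < ∞ := by
                    refine ENNReal.mul_lt_top ?_ measure_ball_lt_top
                    refine IntegrableOn.setLIntegral_lt_top ?_
                    apply integrableOn_Ioi_rpow_of_lt _ one_pos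
                    have h1 : a⁻¹ < 0 := inv_neg''.mpr h0
                    have h2 : a⁻¹ * (d:ℝ) < a⁻¹ * (-a) :=
                      mul_lt_mul_of_neg_left ha h1
                    rwa [mul_neg, inv_mul_cancel₀ hane] at h2

/-- **Basic properties of `l_s` of a test function.** For `φ ∈ C_c^∞(ℝ^d)`:
(a) the integral defining `l_s(φ)(x)` converges for every `x`;
(b) `l_s(φ)` is continuous; (c) `l_s(φ)(x) ≤ C_φ (1+|x|)^{-(d+2s)}` for some
`C_φ > 0`. -/
theorem lsFun_testFn_properties
    (d : ℕ) (hd : 0 < d) (s : ℝ) (hs0 : 0 < s) (hs1 : s < 1)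
    (φ : Ed d → ℝ) (hφ : ContDiff ℝ (⊤ : ℕ∞) φ) (hφc : HasCompactSupport φ) :
    (∀ x : Ed d, Integrable
      (fun y : Ed d => (φ x - φ y) ^ 2 / ‖x - y‖ ^ ((d : ℝ) + 2 * s))) ∧
    Continuous (lsFun d s φ) ∧
    (∃ Cφ : ℝ, 0 < Cφ ∧ ∀ x : Ed d,
      lsFun d s φ x ≤ Cφ * (1 + ‖x‖) ^ (-((d : ℝ) + 2 * s))) := by
  set p : ℝ := (d : ℝ) + 2 * s with hpdef
  have hd1 : (1:ℝ) ≤ d := by exact_mod_cast hd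
  have hp0 : 0 < p := by positivity
  obtain ⟨M, hM⟩ := hφc.exists_bound_of_continuous hφ.continuous
  have hM0 : 0 ≤ M := le_trans (norm_nonneg _) (hM 0)
  obtain ⟨L, hL⟩ := hφ.lipschitzWith_of_hasCompactSupport hφc (by simp)
  -- pointwise bound on the numerator
  have key : ∀ x y : Ed d,
      (φ x - φ y) ^ 2 ≤ min ((L:ℝ) ^ 2 * ‖x - y‖ ^ 2) (4 * M ^ 2) := by
    intro x y
    rw [le_min_iff]
    constructor
    · have h1 : |φ x - φ y| ≤ (L:ℝ) * ‖x - y‖ := by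
        have := hL.dist_le_mul x y
        rwa [Real.dist_eq, dist_eq_norm] at this
      calc (φ x - φ y) ^ 2 = |φ x - φ y| ^ 2 := (sq_abs _).symm
        _ ≤ ((L:ℝ) * ‖x - y‖) ^ 2 := by
            apply pow_le_pow_left₀ (abs_nonneg _) h1 2
        _ = (L:ℝ) ^ 2 * ‖x - y‖ ^ 2 := by ring
    · have h1 : |φ x - φ y| ≤ 2 * M := by
        calc |φ x - φ y| ≤ |φ x| + |φ y| := abs_sub _ _
          _ ≤ M + M := add_le_add (hM x) (hM y)
          _ = 2 * M := by ring
      calc (φ x - φ y) ^ 2 = |φ x - φ y| ^ 2 := (sq_abs _).symm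
        _ ≤ (2 * M) ^ 2 := by apply pow_le_pow_left₀ (abs_nonneg _) h1 2
        _ = 4 * M ^ 2 := by ring
  -- the dominating kernel
  set g : Ed d → ℝ := fun z => min ((L:ℝ) ^ 2 * ‖z‖ ^ 2) (4 * M ^ 2) / ‖z‖ ^ p with hgdef
  have hmin_nonneg : ∀ z : Ed d, 0 ≤ min ((L:ℝ) ^ 2 * ‖z‖ ^ 2) (4 * M ^ 2) := by
    intro z
    rw [le_min_iff]
    constructor <;> positivity
  have hg_nonneg : ∀ z, 0 ≤ g z := fun z =>
    div_nonneg (hmin_nonneg z) (Real.rpow_nonneg (norm_nonneg _) _)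
  have hg_meas : Measurable g := by
    apply Measurable.div
    · exact (((measurable_norm.pow_const 2).const_mul _).min measurable_const)
    · exact measurable_norm.pow_const p
  have hg0 : g 0 = 0 := by
    simp [hgdef, Real.zero_rpow hp0.ne']
  -- integrability of g
  have hg_int : Integrable g := by
    have hnear : IntegrableOn g (Metric.ball (0 : Ed d) 1) := by
      refine Integrable.mono'
        (((integrableOn_rpow_norm_ball d hd (a := 2 - p)
          (by simp only [neg_sub]; linarith)).const_mul ((L:ℝ)^2)))
        hg_meas.aestronglyMeasurable ?_
      refine Eventually.of_forall fun z => ?_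
      rw [Real.norm_of_nonneg (hg_nonneg z)]
      rcases eq_or_ne z 0 with rfl | hz
      · rw [hg0]
        positivity
      · have hzn : (0:ℝ) < ‖z‖ := norm_pos_iff.mpr hz
        have hden : (0:ℝ) < ‖z‖ ^ p := Real.rpow_pos_of_pos hzn _
        calc g z ≤ ((L:ℝ) ^ 2 * ‖z‖ ^ 2) / ‖z‖ ^ p :=
              (div_le_div_iff_of_pos_right hden).mpr (min_le_left _ _)
          _ = (L:ℝ) ^ 2 * ‖z‖ ^ (2 - p) := by
              rw [Real.rpow_sub hzn, mul_div_assoc, Real.rpow_two]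
    have hfar : IntegrableOn g (Metric.ball (0 : Ed d) 1)ᶜ := by
      have hjap : Integrable (fun z : Ed d => (1 + ‖z‖) ^ (-p)) := by
        apply integrable_one_add_norm
        rw [finrank_euclideanSpace_fin]
        linarith
      refine Integrable.mono' ((hjap.const_mul (4 * M ^ 2 * 2 ^ p)).integrableOn)
        hg_meas.aestronglyMeasurable.restrict ?_
      rw [ae_restrict_iff' measurableSet_ball.compl]
      refine Eventually.of_forall fun z hz => ?_
      have hz1 : (1:ℝ) ≤ ‖z‖ := by
        simpa [mem_ball_zero_iff] using hz
      have hzn : (0:ℝ) < ‖z‖ := lt_of_lt_of_le one_pos hz1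
      have hden : (0:ℝ) < ‖z‖ ^ p := Real.rpow_pos_of_pos hzn _
      rw [Real.norm_of_nonneg (hg_nonneg z)]
      have h1 : g z ≤ (4 * M ^ 2) / ‖z‖ ^ p :=
        (div_le_div_iff_of_pos_right hden).mpr (min_le_right _ _)
      have h2 : (1 + ‖z‖) ^ p ≤ 2 ^ p * ‖z‖ ^ p := by
        rw [← Real.mul_rpow (by norm_num) (norm_nonneg _)]
        exact Real.rpow_le_rpow (by linarith) (by linarith) hp0.le
      have h3 : (‖z‖ ^ p)⁻¹ ≤ 2 ^ p * ((1 + ‖z‖) ^ p)⁻¹ := by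
        rw [← div_eq_mul_inv, le_div_iff₀ (by positivity), inv_mul_eq_div,
          div_le_iff₀ hden]
        linarith
      calc g z ≤ (4 * M ^ 2) / ‖z‖ ^ p := h1
        _ = (4 * M ^ 2) * (‖z‖ ^ p)⁻¹ := by rw [div_eq_mul_inv]
        _ ≤ (4 * M ^ 2) * (2 ^ p * ((1 + ‖z‖) ^ p)⁻¹) := by
            apply mul_le_mul_of_nonneg_left h3 (by positivity)
        _ = 4 * M ^ 2 * 2 ^ p * (1 + ‖z‖) ^ (-p) := by
            rw [Real.rpow_neg (by positivity)]
            ring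
    have : IntegrableOn g (Metric.ball (0 : Ed d) 1 ∪ (Metric.ball (0 : Ed d) 1)ᶜ) :=
      hnear.union hfar
    rwa [Set.union_compl_self, integrableOn_univ] at this
  -- pointwise domination of the integrand
  have hpt : ∀ x y : Ed d, (φ x - φ y) ^ 2 / ‖x - y‖ ^ p ≤ g (x - y) := by
    intro x y
    rcases eq_or_ne x y with rfl | hxy
    · simp [hg0]
    · have hzn : (0:ℝ) < ‖x - y‖ := by
        rw [norm_pos_iff, sub_ne_zero]
        exact hxy
      have hden : (0:ℝ) < ‖x - y‖ ^ p := Real.rpow_pos_of_pos hzn _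
      exact (div_le_div_iff_of_pos_right hden).mpr (key x y)
  -- part (a)
  have hInt : ∀ x : Ed d, Integrable
      (fun y : Ed d => (φ x - φ y) ^ 2 / ‖x - y‖ ^ p) := by
    intro x
    have hgx : Integrable (fun y : Ed d => g (x - y)) :=
      (integrable_comp_sub_left g x).mpr hg_int
    refine hgx.mono' ?_ (Eventually.of_forall fun y => ?_)
    · apply Measurable.aestronglyMeasurable
      apply Measurable.div
      · exact ((measurable_const.sub hφ.continuous.measurable).pow_const 2)
      · exact (measurable_const.sub measurable_id').norm.pow_const p
    · rw [Real.norm_of_nonneg (div_nonneg (sq_nonneg _)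
        (Real.rpow_nonneg (norm_nonneg _) _))]
      exact hpt x y
  -- representation by translation
  have hrepr : ∀ x : Ed d,
      lsFun d s φ x = ∫ z : Ed d, (φ x - φ (x - z)) ^ 2 / ‖z‖ ^ p := by
    intro x
    calc lsFun d s φ x
        = ∫ y : Ed d, (φ x - φ (x - (x - y))) ^ 2 / ‖x - y‖ ^ p := by
          unfold lsFun
          congr 1
          funext y
          rw [sub_sub_cancel]
      _ = ∫ z : Ed d, (φ x - φ (x - z)) ^ 2 / ‖z‖ ^ p :=
          integral_sub_left_eq_self (fun z : Ed d => (φ x - φ (x - z)) ^ 2 / ‖z‖ ^ p) volume x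
  -- part (b)
  have hcont : Continuous (lsFun d s φ) := by
    have hc : Continuous fun x : Ed d => ∫ z : Ed d, (φ x - φ (x - z)) ^ 2 / ‖z‖ ^ p := by
      apply continuous_of_dominated (bound := g)
      · intro x
        apply Measurable.aestronglyMeasurable
        apply Measurable.div
        · exact ((measurable_const.sub (hφ.continuous.measurable.comp
            (measurable_const.sub measurable_id'))).pow_const 2)
        · exact measurable_norm.pow_const p
      · intro x
        refine Eventually.of_forall fun z => ?_
        rw [Real.norm_of_nonneg (div_nonneg (sq_nonneg _)
          (Real.rpow_nonneg (norm_nonneg _) _))]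
        have := hpt x (x - z)
        simpa [sub_sub_cancel] using this
      · exact hg_int
      · refine Eventually.of_forall fun z => ?_
        apply Continuous.div_const
        exact ((hφ.continuous.sub (hφ.continuous.comp
          (continuous_id.sub continuous_const))).pow 2)
    have he : lsFun d s φ = fun x => ∫ z : Ed d, (φ x - φ (x - z)) ^ 2 / ‖z‖ ^ p :=
      funext hrepr
    rw [he]
    exact hc
  -- uniform bound
  set B : ℝ := ∫ z : Ed d, g z with hBdef
  have hBnn : 0 ≤ B := integral_nonneg hg_nonneg
  have hB : ∀ x : Ed d, lsFun d s φ x ≤ B := by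
    intro x
    rw [hrepr x]
    have hFx : Integrable (fun z : Ed d => (φ x - φ (x - z)) ^ 2 / ‖z‖ ^ p) := by
      have := (integrable_comp_sub_left
        (fun y : Ed d => (φ x - φ y) ^ 2 / ‖x - y‖ ^ p) x).mpr (hInt x)
      simpa [sub_sub_cancel] using this
    apply integral_mono hFx hg_int
    intro z
    have := hpt x (x - z)
    simpa [sub_sub_cancel] using this
  -- support radius
  obtain ⟨R0, hR0⟩ := hφc.isBounded.subset_closedBall 0
  set R : ℝ := max R0 0 with hRdef
  have hRnn : 0 ≤ R := le_max_right _ _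
  have hR : tsupport φ ⊆ Metric.closedBall 0 R :=
    hR0.trans (Metric.closedBall_subset_closedBall (le_max_left _ _))
  set T : ℝ := 2 * R + 2 with hTdef
  have hTpos : (0:ℝ) < 1 + T := by positivity
  set I2 : ℝ := ∫ y : Ed d, (φ y) ^ 2 with hI2def
  have hI2int : Integrable (fun y : Ed d => (φ y) ^ 2) := by
    apply Continuous.integrable_of_hasCompactSupport (hφ.continuous.pow 2)
    rw [sq]; exact hφc.mul_left
  have hI2nn : 0 ≤ I2 := integral_nonneg fun y => sq_nonneg _
  -- far-field bound
  have hfarBound : ∀ x : Ed d, T ≤ ‖x‖ →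
      lsFun d s φ x ≤ (I2 * 4 ^ p) * (1 + ‖x‖) ^ (-p) := by
    intro x hx
    have hφx : φ x = 0 := by
      apply image_eq_zero_of_notMem_tsupport
      intro hmem
      have := mem_closedBall_zero_iff.mp (hR hmem)
      have : T ≤ R := le_trans hx this
      rw [hTdef] at this
      linarith
    have hkey : ∀ y : Ed d,
        (φ x - φ y) ^ 2 / ‖x - y‖ ^ p ≤ (φ y) ^ 2 * (4 ^ p * (1 + ‖x‖) ^ (-p)) := by
      intro y
      rcases eq_or_ne (φ y) 0 with hy | hy
      · simp [hφx, hy]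
      · have hyR : ‖y‖ ≤ R := mem_closedBall_zero_iff.mp
          (hR (subset_tsupport φ hy))
        have hxy : (1 + ‖x‖) / 4 ≤ ‖x - y‖ := by
          have h1 : ‖x‖ - ‖y‖ ≤ ‖x - y‖ := norm_sub_norm_le x y
          have h2 : T ≤ ‖x‖ := hx
          rw [hTdef] at h2
          linarith
        have hdpos : (0:ℝ) < (1 + ‖x‖) / 4 := by positivity
        have hxypos : (0:ℝ) < ‖x - y‖ := lt_of_lt_of_le hdpos hxy
        rw [hφx]
        have h0 : (0 - φ y) ^ 2 = (φ y) ^ 2 := by ring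
        rw [h0]
        calc (φ y) ^ 2 / ‖x - y‖ ^ p
            ≤ (φ y) ^ 2 / ((1 + ‖x‖) / 4) ^ p := by
              have hb : ((1 + ‖x‖) / 4) ^ p ≤ ‖x - y‖ ^ p :=
                Real.rpow_le_rpow hdpos.le hxy hp0.le
              exact div_le_div_of_nonneg_left (sq_nonneg _)
                (Real.rpow_pos_of_pos hdpos _) hb
          _ = (φ y) ^ 2 * (4 ^ p * (1 + ‖x‖) ^ (-p)) := by
              rw [Real.div_rpow (by positivity) (by norm_num),
                div_div_eq_mul_div, Real.rpow_neg (by positivity),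
                mul_div_assoc, div_eq_mul_inv]
    calc lsFun d s φ x
        ≤ ∫ y : Ed d, (φ y) ^ 2 * (4 ^ p * (1 + ‖x‖) ^ (-p)) :=
          integral_mono (hInt x) (hI2int.mul_const _) hkey
      _ = I2 * (4 ^ p * (1 + ‖x‖) ^ (-p)) :=
          integral_mul_const _ _
      _ = (I2 * 4 ^ p) * (1 + ‖x‖) ^ (-p) := by ring
  -- assemble part (c)
  set C : ℝ := max (I2 * 4 ^ p) (B * (1 + T) ^ p) + 1 with hCdef
  have hmaxnn : 0 ≤ max (I2 * 4 ^ p) (B * (1 + T) ^ p) :=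
    le_trans (by positivity) (le_max_left _ _)
  have hCpos : 0 < C := by rw [hCdef]; linarith
  refine ⟨hInt, hcont, C, hCpos, fun x => ?_⟩
  rcases le_or_gt T ‖x‖ with hT | hT
  · calc lsFun d s φ x ≤ (I2 * 4 ^ p) * (1 + ‖x‖) ^ (-p) := hfarBound x hT
      _ ≤ C * (1 + ‖x‖) ^ (-p) := by
          apply mul_le_mul_of_nonneg_right _ (Real.rpow_nonneg (by positivity) _)
          rw [hCdef]
          have := le_max_left (I2 * 4 ^ p) (B * (1 + T) ^ p)
          linarith
  · have h1 : (1 + T) ^ (-p) ≤ (1 + ‖x‖) ^ (-p) :=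
      Real.rpow_le_rpow_of_nonpos (by positivity) (by linarith)
        (neg_nonpos.mpr hp0.le)
    have h2 : B = B * (1 + T) ^ p * (1 + T) ^ (-p) := by
      rw [mul_assoc, ← Real.rpow_add hTpos, add_neg_cancel, Real.rpow_zero, mul_one]
    calc lsFun d s φ x ≤ B := hB x
      _ = B * (1 + T) ^ p * (1 + T) ^ (-p) := h2
      _ ≤ C * (1 + ‖x‖) ^ (-p) := by
          apply mul_le_mul _ h1 (Real.rpow_nonneg (by positivity) _) hCpos.le
          rw [hCdef]
          have := le_max_right (I2 * 4 ^ p) (B * (1 + T) ^ p)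
          linarith
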